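/- Let r = (0,1,2,3,4,5,6,7,8,9,10,12) and let w_1,...,w_6 be complex numbers of modulus 1. Let z_1,...,z_12 be the twelve numbers w_1, −w_1, w_2, −w_2, ..., w_6, −w_6. Then the 12×12 steering matrix A with entries A_{m,l} = z_l^{r_m} is singular. (Each pair {w_k, −w_k} corresponds to a pair of electrical angles of the form (π(v−1), π·v); the twelve angles obtained from six such pairs always form an ambiguous vector for the array r.) -/

import Mathlib

set_option maxHeartbeats 1000000


private theorem sum_univ_nine' {M : Type*} [AddCommMonoid M] (f : Fin 9 → M) :
    ∑ i, f i = f 0 + f 1 + f 2 + f 3 + f 4 + f 5 + f 6 + f 7 + f 8 := by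
  rw [Fin.sum_univ_castSucc, Fin.sum_univ_eight]
  rfl

private theorem sum_univ_ten' {M : Type*} [AddCommMonoid M] (f : Fin 10 → M) :
    ∑ i, f i = f 0 + f 1 + f 2 + f 3 + f 4 + f 5 + f 6 + f 7 + f 8 + f 9 := by
  rw [Fin.sum_univ_castSucc, sum_univ_nine']
  rfl

private theorem sum_univ_eleven' {M : Type*} [AddCommMonoid M] (f : Fin 11 → M) :
    ∑ i, f i = f 0 + f 1 + f 2 + f 3 + f 4 + f 5 + f 6 + f 7 + f 8 + f 9 + f 10 := by
  rw [Fin.sum_univ_castSucc, sum_univ_ten']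
  rfl

private theorem sum_univ_twelve' {M : Type*} [AddCommMonoid M] (f : Fin 12 → M) :
    ∑ i, f i = f 0 + f 1 + f 2 + f 3 + f 4 + f 5 + f 6 + f 7 + f 8 + f 9 + f 10 + f 11 := by
  rw [Fin.sum_univ_castSucc, sum_univ_eleven']
  rfl

/-- For the linear array `r = (0,1,2,3,4,5,6,7,8,9,10,12)`, any six pairs of
antipodal unimodular numbers `{w k, -w k}` (corresponding to six pairs of electrical
angles of the form `(π(v-1), πv)`) yield a singular `12×12` steering matrix, i.e. an
ambiguous vector of twelve electrical angles. -/
theorem ambiguity_big_array (w : Fin 6 → ℂ) (hw : ∀ k, ‖w k‖ = 1)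
    (z : Fin 12 → ℂ)
    (hz : ∀ k : Fin 6,
      z ⟨2 * (k : ℕ), by have := k.isLt; omega⟩ = w k ∧
      z ⟨2 * (k : ℕ) + 1, by have := k.isLt; omega⟩ = -w k) :
    Matrix.det (Matrix.of fun m l : Fin 12 =>
      z l ^ (![0, 1, 2, 3, 4, 5, 6, 7, 8, 9, 10, 12] m : ℕ)) = 0 := by
  have hz0 : z 0 = w 0 := by simpa using (hz 0).1
  have hz1 : z 1 = -w 0 := by simpa using (hz 0).2
  have hz2 : z 2 = w 1 := by simpa using (hz 1).1
  have hz3 : z 3 = -w 1 := by simpa using (hz 1).2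
  have hz4 : z 4 = w 2 := by simpa using (hz 2).1
  have hz5 : z 5 = -w 2 := by simpa using (hz 2).2
  have hz6 : z 6 = w 3 := by simpa using (hz 3).1
  have hz7 : z 7 = -w 3 := by simpa using (hz 3).2
  have hz8 : z 8 = w 4 := by simpa using (hz 4).1
  have hz9 : z 9 = -w 4 := by simpa using (hz 4).2
  have hz10 : z 10 = w 5 := by simpa using (hz 5).1
  have hz11 : z 11 = -w 5 := by simpa using (hz 5).2
  -- the 5×6 matrix of odd moments has a nontrivial kernel vector
  set B : Matrix (Fin 5) (Fin 6) ℂ := Matrix.of fun j k => w k ^ (2 * (j : ℕ) + 1) with hB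
  have hker : ∃ c : Fin 6 → ℂ, c ≠ 0 ∧ B.mulVec c = 0 := by
    by_contra h
    push_neg at h
    have hinj : Function.Injective B.mulVecLin := by
      rw [← LinearMap.ker_eq_bot, LinearMap.ker_eq_bot']
      intro c hc
      by_contra hc0
      exact h c hc0 (by simpa using hc)
    have hle := LinearMap.finrank_le_finrank_of_injective hinj
    simp [Module.finrank_fintype_fun_eq_card] at hle
  obtain ⟨c, hc0, hc⟩ := hker
  have hBj : ∀ j : Fin 5,
      w 0 ^ (2 * (j : ℕ) + 1) * c 0 + w 1 ^ (2 * (j : ℕ) + 1) * c 1 +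
      w 2 ^ (2 * (j : ℕ) + 1) * c 2 + w 3 ^ (2 * (j : ℕ) + 1) * c 3 +
      w 4 ^ (2 * (j : ℕ) + 1) * c 4 + w 5 ^ (2 * (j : ℕ) + 1) * c 5 = 0 := by
    intro j
    have := congrFun hc j
    simpa [hB, Matrix.mulVec, dotProduct, Fin.sum_univ_six, add_assoc] using this
  have e0 := hBj ⟨0, by norm_num⟩
  have e1 := hBj ⟨1, by norm_num⟩
  have e2 := hBj ⟨2, by norm_num⟩
  have e3 := hBj ⟨3, by norm_num⟩
  have e4 := hBj ⟨4, by norm_num⟩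
  norm_num at e0 e1 e2 e3 e4
  -- the kernel vector for the big matrix
  set v : Fin 12 → ℂ :=
    ![c 0, -c 0, c 1, -c 1, c 2, -c 2, c 3, -c 3, c 4, -c 4, c 5, -c 5] with hv
  have hv0 : v 0 = c 0 := rfl
  have hv1 : v 1 = -c 0 := rfl
  have hv2 : v 2 = c 1 := rfl
  have hv3 : v 3 = -c 1 := rfl
  have hv4 : v 4 = c 2 := rfl
  have hv5 : v 5 = -c 2 := rfl
  have hv6 : v 6 = c 3 := rfl
  have hv7 : v 7 = -c 3 := rfl
  have hv8 : v 8 = c 4 := rfl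
  have hv9 : v 9 = -c 4 := rfl
  have hv10 : v 10 = c 5 := rfl
  have hv11 : v 11 = -c 5 := rfl
  rw [← Matrix.exists_mulVec_eq_zero_iff]
  refine ⟨v, ?_, ?_⟩
  · intro h
    apply hc0
    funext k
    fin_cases k
    · simpa [hv] using congrFun h 0
    · simpa [hv] using congrFun h 2
    · simpa [hv] using congrFun h 4
    · simpa [hv] using congrFun h 6
    · simpa [hv] using congrFun h 8
    · simpa [hv] using congrFun h 10
  · funext m
    fin_cases m
    · simp only [Matrix.mulVec, dotProduct, sum_univ_twelve', Matrix.of_apply,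
        Matrix.cons_val_zero, Matrix.cons_val_one, Matrix.head_cons, Matrix.cons_val_two,
        Matrix.tail_cons, Matrix.cons_val_three, Matrix.cons_val_four, Matrix.cons_val_succ,
        hv0, hv1, hv2, hv3, hv4, hv5, hv6, hv7, hv8, hv9, hv10, hv11, hz0, hz1, hz2, hz3, hz4, hz5, hz6, hz7, hz8, hz9, hz10, hz11, Pi.zero_apply]
      norm_num
      all_goals ring
    · simp only [Matrix.mulVec, dotProduct, sum_univ_twelve', Matrix.of_apply,
        Matrix.cons_val_zero, Matrix.cons_val_one, Matrix.head_cons, Matrix.cons_val_two,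
        Matrix.tail_cons, Matrix.cons_val_three, Matrix.cons_val_four, Matrix.cons_val_succ,
        hv0, hv1, hv2, hv3, hv4, hv5, hv6, hv7, hv8, hv9, hv10, hv11, hz0, hz1, hz2, hz3, hz4, hz5, hz6, hz7, hz8, hz9, hz10, hz11, Pi.zero_apply]
      norm_num
      linear_combination 2 * e0
    · simp only [Matrix.mulVec, dotProduct, sum_univ_twelve', Matrix.of_apply,
        Matrix.cons_val_zero, Matrix.cons_val_one, Matrix.head_cons, Matrix.cons_val_two,
        Matrix.tail_cons, Matrix.cons_val_three, Matrix.cons_val_four, Matrix.cons_val_succ,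
        hv0, hv1, hv2, hv3, hv4, hv5, hv6, hv7, hv8, hv9, hv10, hv11, hz0, hz1, hz2, hz3, hz4, hz5, hz6, hz7, hz8, hz9, hz10, hz11, Pi.zero_apply]
      norm_num
      all_goals ring
    · simp only [Matrix.mulVec, dotProduct, sum_univ_twelve', Matrix.of_apply,
        Matrix.cons_val_zero, Matrix.cons_val_one, Matrix.head_cons, Matrix.cons_val_two,
        Matrix.tail_cons, Matrix.cons_val_three, Matrix.cons_val_four, Matrix.cons_val_succ,
        hv0, hv1, hv2, hv3, hv4, hv5, hv6, hv7, hv8, hv9, hv10, hv11, hz0, hz1, hz2, hz3, hz4, hz5, hz6, hz7, hz8, hz9, hz10, hz11, Pi.zero_apply]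
      norm_num
      linear_combination 2 * e1
    · simp only [Matrix.mulVec, dotProduct, sum_univ_twelve', Matrix.of_apply,
        Matrix.cons_val_zero, Matrix.cons_val_one, Matrix.head_cons, Matrix.cons_val_two,
        Matrix.tail_cons, Matrix.cons_val_three, Matrix.cons_val_four, Matrix.cons_val_succ,
        hv0, hv1, hv2, hv3, hv4, hv5, hv6, hv7, hv8, hv9, hv10, hv11, hz0, hz1, hz2, hz3, hz4, hz5, hz6, hz7, hz8, hz9, hz10, hz11, Pi.zero_apply]
      norm_num
      all_goals ring
    · simp only [Matrix.mulVec, dotProduct, sum_univ_twelve', Matrix.of_apply,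
        Matrix.cons_val_zero, Matrix.cons_val_one, Matrix.head_cons, Matrix.cons_val_two,
        Matrix.tail_cons, Matrix.cons_val_three, Matrix.cons_val_four, Matrix.cons_val_succ,
        hv0, hv1, hv2, hv3, hv4, hv5, hv6, hv7, hv8, hv9, hv10, hv11, hz0, hz1, hz2, hz3, hz4, hz5, hz6, hz7, hz8, hz9, hz10, hz11, Pi.zero_apply]
      norm_num
      linear_combination 2 * e2
    · simp only [Matrix.mulVec, dotProduct, sum_univ_twelve', Matrix.of_apply,
        Matrix.cons_val_zero, Matrix.cons_val_one, Matrix.head_cons, Matrix.cons_val_two,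
        Matrix.tail_cons, Matrix.cons_val_three, Matrix.cons_val_four, Matrix.cons_val_succ,
        hv0, hv1, hv2, hv3, hv4, hv5, hv6, hv7, hv8, hv9, hv10, hv11, hz0, hz1, hz2, hz3, hz4, hz5, hz6, hz7, hz8, hz9, hz10, hz11, Pi.zero_apply]
      norm_num
      all_goals ring
    · simp only [Matrix.mulVec, dotProduct, sum_univ_twelve', Matrix.of_apply,
        Matrix.cons_val_zero, Matrix.cons_val_one, Matrix.head_cons, Matrix.cons_val_two,
        Matrix.tail_cons, Matrix.cons_val_three, Matrix.cons_val_four, Matrix.cons_val_succ,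
        hv0, hv1, hv2, hv3, hv4, hv5, hv6, hv7, hv8, hv9, hv10, hv11, hz0, hz1, hz2, hz3, hz4, hz5, hz6, hz7, hz8, hz9, hz10, hz11, Pi.zero_apply]
      norm_num
      linear_combination 2 * e3
    · simp only [Matrix.mulVec, dotProduct, sum_univ_twelve', Matrix.of_apply,
        Matrix.cons_val_zero, Matrix.cons_val_one, Matrix.head_cons, Matrix.cons_val_two,
        Matrix.tail_cons, Matrix.cons_val_three, Matrix.cons_val_four, Matrix.cons_val_succ,
        hv0, hv1, hv2, hv3, hv4, hv5, hv6, hv7, hv8, hv9, hv10, hv11, hz0, hz1, hz2, hz3, hz4, hz5, hz6, hz7, hz8, hz9, hz10, hz11, Pi.zero_apply]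
      norm_num
      all_goals ring
    · simp only [Matrix.mulVec, dotProduct, sum_univ_twelve', Matrix.of_apply,
        Matrix.cons_val_zero, Matrix.cons_val_one, Matrix.head_cons, Matrix.cons_val_two,
        Matrix.tail_cons, Matrix.cons_val_three, Matrix.cons_val_four, Matrix.cons_val_succ,
        hv0, hv1, hv2, hv3, hv4, hv5, hv6, hv7, hv8, hv9, hv10, hv11, hz0, hz1, hz2, hz3, hz4, hz5, hz6, hz7, hz8, hz9, hz10, hz11, Pi.zero_apply]
      norm_num
      linear_combination 2 * e4
    · simp only [Matrix.mulVec, dotProduct, sum_univ_twelve', Matrix.of_apply,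
        Matrix.cons_val_zero, Matrix.cons_val_one, Matrix.head_cons, Matrix.cons_val_two,
        Matrix.tail_cons, Matrix.cons_val_three, Matrix.cons_val_four, Matrix.cons_val_succ,
        hv0, hv1, hv2, hv3, hv4, hv5, hv6, hv7, hv8, hv9, hv10, hv11, hz0, hz1, hz2, hz3, hz4, hz5, hz6, hz7, hz8, hz9, hz10, hz11, Pi.zero_apply]
      norm_num
      all_goals ring
    · simp only [Matrix.mulVec, dotProduct, sum_univ_twelve', Matrix.of_apply,
        Matrix.cons_val_zero, Matrix.cons_val_one, Matrix.head_cons, Matrix.cons_val_two,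
        Matrix.tail_cons, Matrix.cons_val_three, Matrix.cons_val_four, Matrix.cons_val_succ,
        hv0, hv1, hv2, hv3, hv4, hv5, hv6, hv7, hv8, hv9, hv10, hv11, hz0, hz1, hz2, hz3, hz4, hz5, hz6, hz7, hz8, hz9, hz10, hz11, Pi.zero_apply]
      norm_num
      all_goals ring
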